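/- arXiv:1611.05576 — 3 statements merged into one kernel-verified Lean document; each statement's English description precedes it below -/
import Mathlib

section
/- For constants a > 0 and b > 0 and a given vector F ∈ ℝ², the nonlinear equation a·u + b·|u|·u = F (where |·| is the Euclidean norm) has the unique solution u = F/γ, where γ = a/2 + (1/2)·√(a² + 4b|F|). -/
open scoped RealInnerProductSpace

theorem stmt0 (a b : ℝ) (ha : 0 < a) (hb : 0 < b)
    (F : EuclideanSpace ℝ (Fin 2)) :
    ∀ u : EuclideanSpace ℝ (Fin 2),
      a • u + b • (‖u‖ • u) = F ↔
        u = (a / 2 + (1 / 2) * Real.sqrt (a ^ 2 + 4 * b * ‖F‖))⁻¹ • F := by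
  intro u
  set s := Real.sqrt (a ^ 2 + 4 * b * ‖F‖) with hs
  have hFnn : (0:ℝ) ≤ ‖F‖ := norm_nonneg _
  have hsnn : 0 ≤ s := Real.sqrt_nonneg _
  have hs2 : s ^ 2 = a ^ 2 + 4 * b * ‖F‖ := Real.sq_sqrt (by positivity)
  set γ := a / 2 + (1/2) * s with hγ
  have hγpos : 0 < γ := by positivity
  have hne : γ ≠ 0 := ne_of_gt hγpos
  have hγeq : γ ^ 2 = a * γ + b * ‖F‖ := by rw [hγ]; nlinarith
  constructor
  · intro h
    have h' : (a + b * ‖u‖) • u = F := by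
      rw [add_smul, ← smul_smul]; exact h
    have hu : (0:ℝ) ≤ ‖u‖ := norm_nonneg _
    have hc : (0:ℝ) ≤ a + b * ‖u‖ := by positivity
    have hn : (a + b * ‖u‖) * ‖u‖ = ‖F‖ := by
      have := congrArg norm h'
      rwa [norm_smul, Real.norm_of_nonneg hc] at this
    have key : a + b * ‖u‖ = γ := by
      have hx : a + 2 * b * ‖u‖ = s := by
        have hxsq : (a + 2 * b * ‖u‖) ^ 2 = s ^ 2 := by nlinarith [hn]
        have h1 := Real.sqrt_sq (by positivity : (0:ℝ) ≤ a + 2 * b * ‖u‖)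
        rw [← h1, hxsq, Real.sqrt_sq hsnn]
      rw [hγ]; linarith
    rw [key] at h'
    rw [← h', smul_smul, inv_mul_cancel₀ hne, one_smul]
  · intro h
    subst h
    have hnorm : ‖γ⁻¹ • F‖ = γ⁻¹ * ‖F‖ := by
      rw [norm_smul, Real.norm_of_nonneg (by positivity)]
    rw [hnorm, smul_smul, smul_smul, smul_smul, ← add_smul]
    have hco : a * γ⁻¹ + b * (γ⁻¹ * ‖F‖) * γ⁻¹ = 1 := by
      field_simp
      nlinarith [hγeq]
    rw [hco, one_smul]
end

section
/- For all u, v ∈ ℝ², (|u|·u − |v|·v) · (u − v) ≥ (1/2)·(|u| + |v|)·|u − v|², and in particular the map v ↦ |v|v is monotone. -/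
open scoped RealInnerProductSpace

theorem stmt5 :
    (∀ u v : EuclideanSpace ℝ (Fin 2),
      (1 / 2) * (‖u‖ + ‖v‖) * ‖u - v‖ ^ 2 ≤
        ⟪‖u‖ • u - ‖v‖ • v, u - v⟫) ∧
    ∀ u v : EuclideanSpace ℝ (Fin 2),
      0 ≤ ⟪‖u‖ • u - ‖v‖ • v, u - v⟫ := by
  have key : ∀ u v : EuclideanSpace ℝ (Fin 2),
      (1 / 2) * (‖u‖ + ‖v‖) * ‖u - v‖ ^ 2 ≤
        ⟪‖u‖ • u - ‖v‖ • v, u - v⟫ := by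
    intro u v
    have h1 : ⟪‖u‖ • u - ‖v‖ • v, u - v⟫ =
        ‖u‖ * ‖u‖ ^ 2 + ‖v‖ * ‖v‖ ^ 2 - (‖u‖ + ‖v‖) * ⟪u, v⟫ := by
      simp only [inner_sub_left, inner_sub_right, real_inner_smul_left,
        real_inner_self_eq_norm_sq, real_inner_comm v u]
      ring
    have h2 : ‖u - v‖ ^ 2 = ‖u‖ ^ 2 - 2 * ⟪u, v⟫ + ‖v‖ ^ 2 := by
      rw [norm_sub_sq_real]
    rw [h1, h2]
    nlinarith [norm_nonneg u, norm_nonneg v, sq_nonneg (‖u‖ - ‖v‖)]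
  refine ⟨key, fun u v => le_trans ?_ (key u v)⟩
  positivity
end

section
/- Let c > 0, d > 0, and f, g ∈ ℝ² (here g denotes the vector ∇p − f with sign flipped). If u ∈ ℝ² satisfies c·u + d·|u|·u = −g, then u = −2g / (c + √(c² + 4d|g|)). -/
theorem stmt7 (c d : ℝ) (hc : 0 < c) (hd : 0 < d)
    (g u : EuclideanSpace ℝ (Fin 2))
    (hu : c • u + d • (‖u‖ • u) = -g) :
    u = (-2 / (c + Real.sqrt (c ^ 2 + 4 * d * ‖g‖))) • g := by
  set a : ℝ := c + d * ‖u‖ with ha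
  have ha0 : 0 < a := by positivity
  have key : a • u = -g := by
    rw [← hu, ha, add_smul, smul_smul]
  have hg : ‖g‖ = a * ‖u‖ := by
    have := congrArg norm key
    rwa [norm_smul, norm_neg, Real.norm_eq_abs, abs_of_pos ha0, eq_comm] at this
  have hs : Real.sqrt (c ^ 2 + 4 * d * ‖g‖) = c + 2 * d * ‖u‖ := by
    have : c ^ 2 + 4 * d * ‖g‖ = (c + 2 * d * ‖u‖) ^ 2 := by
      rw [hg, ha]; ring
    rw [this, Real.sqrt_sq (by positivity)]
  rw [hs]
  have h2 : c + (c + 2 * d * ‖u‖) = 2 * a := by rw [ha]; ring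
  rw [h2]
  have hg' : g = -(a • u) := by rw [key, neg_neg]
  have hu' : u = (-1 / a) • g := by
    rw [hg', smul_neg, smul_smul, neg_div, neg_mul, one_div,
      inv_mul_cancel₀ (ne_of_gt ha0)]
    simp
  rw [hu']
  congr 1
  field_simp
end
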